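/- For a given nonincreasing degree sequence π of a tree, any two trees with degree sequence π that admit a BFS-ordering are isomorphic; consequently there is a unique (up to isomorphism) tree T*_π with degree sequence π having a BFS-ordering. -/

import Mathlib

open Matrix Finset SimpleGraph
open scoped Classical

/-- Degree of a vertex (no decidability assumptions). -/
noncomputable def deg {V : Type*} (G : SimpleGraph V) (v : V) : ℕ :=
  (G.neighborSet v).ncard

/-- The matrix `A_alpha(G) = alpha D(G) + (1-alpha) A(G)`. -/
noncomputable def Aalpha {V : Type*} [Fintype V] (G : SimpleGraph V) (α : ℝ) :
    Matrix V V ℝ :=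
  fun i j => if i = j then α * (deg G i : ℝ) else if G.Adj i j then 1 - α else 0

/-- The spectral radius (largest eigenvalue) of a real symmetric matrix,
as the supremum of its eigenvalues. -/
noncomputable def specRad {V : Type*} [Fintype V] (M : Matrix V V ℝ) : ℝ :=
  sSup {t : ℝ | ∃ x : V → ℝ, x ≠ 0 ∧ M.mulVec x = t • x}

/-- `σ` enumerates the vertices of `G` as a BFS-ordering rooted at `σ 0`:
heights are nondecreasing, degrees are nonincreasing, and the crossing
condition (3) holds. -/
def BFSord {n : ℕ} (G : SimpleGraph (Fin n)) (hn : 0 < n) (σ : Fin n ≃ Fin n) : Prop :=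
  (∀ i j : Fin n, i ≤ j → G.dist (σ ⟨0, hn⟩) (σ i) ≤ G.dist (σ ⟨0, hn⟩) (σ j)) ∧
  (∀ i j : Fin n, i ≤ j → deg G (σ j) ≤ deg G (σ i)) ∧
  (∀ i j a b : Fin n, G.Adj (σ i) (σ a) → G.Adj (σ j) (σ b) →
    ¬ G.Adj (σ i) (σ b) → ¬ G.Adj (σ j) (σ a) →
    G.dist (σ ⟨0, hn⟩) (σ i) = G.dist (σ ⟨0, hn⟩) (σ j) →
    G.dist (σ ⟨0, hn⟩) (σ a) = G.dist (σ ⟨0, hn⟩) (σ i) + 1 →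
    G.dist (σ ⟨0, hn⟩) (σ b) = G.dist (σ ⟨0, hn⟩) (σ i) + 1 →
    i < j → a < b)

/-- `G` admits a BFS-ordering. -/
def hasBFSOrdering {n : ℕ} (G : SimpleGraph (Fin n)) : Prop :=
  ∃ (hn : 0 < n) (σ : Fin n ≃ Fin n), BFSord G hn σ


/-- two "sorted" (antitone wrt a linear order) tuples with the same value multiset agree. -/
lemma sorted_tuple_unique {n : ℕ} {X : Type*} [LinearOrder X] (f g : Fin n → X)
    (hf : ∀ i j : Fin n, i ≤ j → f j ≤ f i) (hg : ∀ i j : Fin n, i ≤ j → g j ≤ g i)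
    (hperm : ((List.finRange n).map f).Perm ((List.finRange n).map g)) : f = g := by
  have hsf : ((List.finRange n).map f).Pairwise (· ≥ ·) := by
    refine (List.pairwise_map).2 ?_
    exact (List.pairwise_lt_finRange n).imp (fun h => hf _ _ h.le)
  have hsg : ((List.finRange n).map g).Pairwise (· ≥ ·) := by
    refine (List.pairwise_map).2 ?_
    exact (List.pairwise_lt_finRange n).imp (fun h => hg _ _ h.le)
  have : (List.finRange n).map f = (List.finRange n).map g :=
    List.Perm.eq_of_pairwise' hsf hsg hperm
  funext k
  have h1 := congrArg (fun l => l[(k : ℕ)]?) this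
  simpa using h1

lemma perm_map_of_comp {n : ℕ} {X : Type*} (f g : Fin n → X) (π : Equiv.Perm (Fin n))
    (h : ∀ k, f k = g (π k)) :
    ((List.finRange n).map f).Perm ((List.finRange n).map g) := by
  have h1 : (List.finRange n).map f = ((List.finRange n).map π).map g := by
    rw [List.map_map]; exact List.map_congr_left fun k _ => h k
  rw [h1]
  exact (π.map_finRange_perm.map g)

lemma perm_map_of_fibers {n : ℕ} {X : Type*} [DecidableEq X] (f g : Fin n → X)
    (h : ∀ x : X, (univ.filter (fun k => f k = x)).card = (univ.filter (fun k => g k = x)).card) :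
    ((List.finRange n).map f).Perm ((List.finRange n).map g) := by
  rw [← Multiset.coe_eq_coe]
  have hu : ((List.finRange n : List (Fin n)) : Multiset (Fin n)) = Finset.univ.val := by
    have : Finset.univ.val.map (id : Fin n → Fin n) = List.ofFn (id : Fin n → Fin n) :=
      Fin.univ_val_map id
    simpa [List.ofFn_id, Multiset.map_id] using this.symm
  have : (Multiset.map f ((List.finRange n : List (Fin n)) : Multiset (Fin n)))
      = Multiset.map g ((List.finRange n : List (Fin n)) : Multiset (Fin n)) := by
    rw [hu]
    ext x
    rw [Multiset.count_map, Multiset.count_map]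
    have h1 := h x
    classical
    simp only [Multiset.filter_congr (fun a _ => (eq_comm : x = f a ↔ f a = x)),
      Multiset.filter_congr (fun a _ => (eq_comm : x = g a ↔ g a = x))]
    simpa [Finset.card, Finset.filter_val] using h1
  simpa using this

variable {V : Type*} [DecidableEq V] {G : SimpleGraph V}

lemma dist_to_root_le_of_mem_support {r u w : V} (p : G.Walk u r) (hw : w ∈ p.support) :
    G.dist w r ≤ p.length - (p.takeUntil w hw).length := by
  have hspec := p.take_spec hw
  have hlen : (p.takeUntil w hw).length + (p.dropUntil w hw).length = p.length := by
    conv_rhs => rw [← hspec]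
    rw [Walk.length_append]
  have h1 : G.dist w r ≤ (p.dropUntil w hw).length := SimpleGraph.dist_le _
  omega

lemma tree_adj_dist (hT : G.IsTree) (r : V) {u v : V} (huv : G.Adj u v) :
    G.dist r v = G.dist r u + 1 ∨ G.dist r u = G.dist r v + 1 := by
  have hconn := hT.isConnected
  have h1 : G.dist r v ≤ G.dist r u + 1 := by
    have := hconn.dist_triangle (u := r) (v := u) (w := v)
    have hd : G.dist u v = 1 := (SimpleGraph.dist_eq_one_iff_adj).2 huv
    omega
  have h2 : G.dist r u ≤ G.dist r v + 1 := by
    have := hconn.dist_triangle (u := r) (v := v) (w := u)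
    have hd : G.dist v u = 1 := (SimpleGraph.dist_eq_one_iff_adj).2 huv.symm
    omega
  have hne : G.dist r u ≠ G.dist r v := by
    intro heq
    set h := G.dist r u with hh
    obtain ⟨p, hp, hplen⟩ := hconn.exists_path_of_dist u r
    have hpl : p.length = h := by rw [hplen, SimpleGraph.dist_comm]
    by_cases hv : v ∈ p.support
    · have hle := dist_to_root_le_of_mem_support p hv
      have htk : 1 ≤ (p.takeUntil v hv).length := by
        rcases Nat.eq_zero_or_pos (p.takeUntil v hv).length with h0 | h0
        · exact absurd (Walk.eq_of_length_eq_zero h0) (G.ne_of_adj huv)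
        · omega
      have hd1 : G.dist v r = G.dist r v := SimpleGraph.dist_comm ..
      have hpos : 1 ≤ h := by
        rcases Nat.eq_zero_or_pos h with h0 | h0
        · have hu0 : r = u := (hconn.dist_eq_zero_iff).1 h0
          have hv0 : r = v := (hconn.dist_eq_zero_iff).1 (by omega)
          exact absurd (hu0 ▸ hv0) (G.ne_of_adj huv)
        · omega
      omega
    · have hq : (Walk.cons huv.symm p).IsPath := (Walk.cons_isPath_iff _ _).2 ⟨hp, hv⟩
      obtain ⟨p', hp', hp'len⟩ := hconn.exists_path_of_dist v r
      have := (hT.existsUnique_path v r).unique hq hp'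
      have hlen := congrArg Walk.length this
      rw [SimpleGraph.dist_comm] at hp'len
      simp only [Walk.length_cons, hpl, hp'len] at hlen
      omega
  omega

/-- unique parent: unique neighbor closer to the root. -/
lemma tree_unique_parent (hT : G.IsTree) (r : V) {v : V} (hv : v ≠ r) :
    ∃! u, G.Adj v u ∧ G.dist r u + 1 = G.dist r v := by
  have hconn := hT.isConnected
  have hpos : 1 ≤ G.dist r v := hconn.pos_dist_of_ne (Ne.symm hv)
  obtain ⟨p, hp, hplen⟩ := hconn.exists_path_of_dist v r
  have hpl : p.length = G.dist r v := by rw [hplen, SimpleGraph.dist_comm]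
  have hnil : ¬ p.Nil := by
    rw [Walk.not_nil_iff_lt_length]; omega
  obtain ⟨u, hadj, q, rfl⟩ := Walk.not_nil_iff.1 hnil
  have hql : q.length + 1 = G.dist r v := by simpa using hpl
  have hdru : G.dist r u = G.dist r v - 1 := by
    have hle : G.dist r u ≤ q.length := by
      have := SimpleGraph.dist_le q.reverse
      simpa using this
    have hge := tree_adj_dist hT r hadj
    omega
  refine ⟨u, ⟨hadj, by omega⟩, ?_⟩
  rintro u' ⟨hadj', hd'⟩
  by_contra hne
  obtain ⟨q', hq', hq'len⟩ := hconn.exists_path_of_dist u' r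
  have hq'l : q'.length = G.dist r u' := by rw [hq'len, SimpleGraph.dist_comm]
  have hvq' : v ∉ q'.support := by
    intro hmem
    have h3 := dist_to_root_le_of_mem_support q' hmem
    have h4 : G.dist v r = G.dist r v := SimpleGraph.dist_comm ..
    omega
  have hP2 : (Walk.cons hadj' q').IsPath := (Walk.cons_isPath_iff _ _).2 ⟨hq', hvq'⟩
  have heqw := (hT.existsUnique_path v r).unique hp hP2
  have h1 : (Walk.cons hadj q).getVert 1 = u := (Walk.getVert_cons_succ (n := 0) _ hadj).trans (Walk.getVert_zero _)
  have h2 : (Walk.cons hadj' q').getVert 1 = u' := (Walk.getVert_cons_succ (n := 0) _ hadj').trans (Walk.getVert_zero _)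
  rw [heqw, h2] at h1
  exact hne h1


def cseq (n : ℕ) (d : Fin n → ℕ) : ℕ → ℕ := fun m =>
  if h : m < n then (if m = 0 then d ⟨m, h⟩ else d ⟨m, h⟩ - 1) else 0

def Sseq (n : ℕ) (d : Fin n → ℕ) : ℕ → ℕ := fun i => 1 + ∑ m ∈ Finset.range i, cseq n d m

noncomputable def pnat (n : ℕ) (d : Fin n → ℕ) : ℕ → ℕ := fun k =>
  Nat.findGreatest (fun i => Sseq n d i ≤ k) (n - 1)

section facts
variable {n : ℕ} {d : Fin n → ℕ}

lemma cseq_anti (hmono : ∀ i j : Fin n, i ≤ j → d j ≤ d i) :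
    ∀ a b : ℕ, a ≤ b → cseq n d b ≤ cseq n d a := by
  intro a b hab
  unfold cseq
  by_cases hb : b < n
  · have ha : a < n := lt_of_le_of_lt hab hb
    rw [dif_pos hb, dif_pos ha]
    have hd := hmono ⟨a, ha⟩ ⟨b, hb⟩ hab
    by_cases ha0 : a = 0
    · subst ha0
      by_cases hb0 : b = 0
      · subst hb0; simp
      · rw [if_pos rfl, if_neg hb0]
        omega
    · have hb0 : b ≠ 0 := by omega
      rw [if_neg ha0, if_neg hb0]
      omega
  · rw [dif_neg hb]
    omega

lemma Sseq_mono : ∀ a b : ℕ, a ≤ b → Sseq n d a ≤ Sseq n d b := by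
  intro a b hab
  unfold Sseq
  have := Finset.sum_le_sum_of_subset (f := cseq n d) (Finset.range_subset_range.2 hab)
  omega

lemma sum_cseq (hn : 1 ≤ n) (hpos : ∀ i, 1 ≤ d i) (hsum : ∑ i, d i = 2 * (n - 1)) :
    ∑ m ∈ Finset.range n, cseq n d m = n - 1 := by
  classical
  have h1 : ∑ m ∈ Finset.range n, cseq n d m
      = ∑ i : Fin n, (if (i : ℕ) = 0 then d i else d i - 1) := by
    rw [← Fin.sum_univ_eq_sum_range]
    apply Finset.sum_congr rfl
    intro i _
    unfold cseq
    rw [dif_pos i.isLt]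
  have h2 : ∑ i : Fin n, ((if (i : ℕ) = 0 then d i else d i - 1)
      + (if (i : ℕ) = 0 then 0 else 1)) = ∑ i, d i := by
    apply Finset.sum_congr rfl
    intro i _
    by_cases h0 : (i : ℕ) = 0
    · simp [h0]
    · rw [if_neg h0, if_neg h0]
      have := hpos i
      omega
  have h3 : ∑ i : Fin n, (if (i : ℕ) = 0 then (0:ℕ) else 1) = n - 1 := by
    rw [Finset.sum_ite, Finset.sum_const, Finset.sum_const]
    have hfil : (Finset.univ.filter (fun i : Fin n => (i : ℕ) = 0)) = {⟨0, hn⟩} := by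
      ext i
      simp only [Finset.mem_filter, Finset.mem_univ, true_and, Finset.mem_singleton]
      constructor
      · intro h; exact Fin.ext h
      · intro h; rw [h]
    have hcards : (Finset.univ.filter (fun i : Fin n => (i : ℕ) = 0)).card
        + (Finset.univ.filter (fun i : Fin n => ¬ (i : ℕ) = 0)).card = n := by
      rw [Finset.card_filter_add_card_filter_not]
      simp
    rw [hfil] at hcards
    simp only [Finset.card_singleton] at hcards
    simp only [smul_eq_mul, mul_zero, mul_one, zero_add]
    omega
  rw [Finset.sum_add_distrib] at h2
  omega

lemma Sseq_ge (hn : 1 ≤ n) (hpos : ∀ i, 1 ≤ d i) (hmono : ∀ i j : Fin n, i ≤ j → d j ≤ d i)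
    (hsum : ∑ i, d i = 2 * (n - 1)) :
    ∀ i : ℕ, i ≤ n - 1 → i + 1 ≤ Sseq n d i := by
  intro i hi
  rcases Nat.eq_zero_or_pos i with rfl | hipos
  · unfold Sseq; simp
  by_contra hcon
  push_neg at hcon
  unfold Sseq at hcon
  have hsumlt : ∑ m ∈ Finset.range i, cseq n d m < i := by omega
  have hterm : ∀ m ∈ Finset.range i, cseq n d (i-1) ≤ cseq n d m := by
    intro m hm
    rw [Finset.mem_range] at hm
    exact cseq_anti hmono m (i-1) (by omega)
  have hlb : i * cseq n d (i-1) ≤ ∑ m ∈ Finset.range i, cseq n d m := by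
    calc i * cseq n d (i-1) = ∑ _m ∈ Finset.range i, cseq n d (i-1) := by
          rw [Finset.sum_const, Finset.card_range]; ring
      _ ≤ _ := Finset.sum_le_sum hterm
  have hc0 : cseq n d (i-1) = 0 := by
    by_contra hc
    have : 1 ≤ cseq n d (i-1) := by omega
    nlinarith
  have hzero : ∀ m, i - 1 ≤ m → cseq n d m = 0 := by
    intro m hm
    have := cseq_anti hmono (i-1) m hm
    omega
  have htot : ∑ m ∈ Finset.range n, cseq n d m = ∑ m ∈ Finset.range i, cseq n d m := by
    symm
    apply Finset.sum_subset (Finset.range_subset_range.2 (by omega))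
    intro m _ hm2
    rw [Finset.mem_range] at hm2
    exact hzero m (by omega)
  rw [sum_cseq hn hpos hsum] at htot
  omega

-- pnat basic facts
lemma pnat_le (hn : 1 ≤ n) (k : ℕ) : pnat n d k ≤ n - 1 := Nat.findGreatest_le _

lemma pnat_mono : ∀ a b : ℕ, a ≤ b → pnat n d a ≤ pnat n d b := by
  intro a b hab
  exact Nat.findGreatest_mono (P := fun i => Sseq n d i ≤ a) (Q := fun i => Sseq n d i ≤ b)
    (fun i hi => le_trans hi hab) le_rfl

lemma pnat_lt_self (hn : 1 ≤ n) (hpos : ∀ i, 1 ≤ d i) (hmono : ∀ i j : Fin n, i ≤ j → d j ≤ d i)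
    (hsum : ∑ i, d i = 2 * (n - 1)) :
    ∀ k : ℕ, k ≠ 0 → pnat n d k < k := by
  intro k hk
  rcases Nat.eq_zero_or_pos (pnat n d k) with h0 | h0
  · omega
  · have hP : Sseq n d (pnat n d k) ≤ k :=
      Nat.findGreatest_of_ne_zero (P := fun i => Sseq n d i ≤ k) (m := pnat n d k)
        rfl (by omega)
    have := Sseq_ge hn hpos hmono hsum (pnat n d k) (pnat_le hn k)
    omega

lemma pnat_spec1 (hn : 1 ≤ n) {k : ℕ} (hk : 1 ≤ k) : Sseq n d (pnat n d k) ≤ k := by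
  exact Nat.findGreatest_spec (P := fun i => Sseq n d i ≤ k) (m := 0) (Nat.zero_le _)
    (by unfold Sseq; simpa using hk)

lemma Sseq_top (hn : 1 ≤ n) (hpos : ∀ i, 1 ≤ d i) (hsum : ∑ i, d i = 2 * (n - 1)) :
    Sseq n d n = n := by
  unfold Sseq
  rw [sum_cseq hn hpos hsum]
  omega

lemma pnat_spec2 (hn : 1 ≤ n) (hpos : ∀ i, 1 ≤ d i) (hsum : ∑ i, d i = 2 * (n - 1))
    {k : ℕ} (hk : k < n) : k < Sseq n d (pnat n d k + 1) := by
  by_cases hq : pnat n d k + 1 ≤ n - 1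
  · by_contra hcon
    push_neg at hcon
    exact Nat.findGreatest_is_greatest (P := fun i => Sseq n d i ≤ k)
      (Nat.lt_succ_self _) hq hcon
  · have h1 : n ≤ pnat n d k + 1 := by omega
    have := Sseq_mono (d := d) n (pnat n d k + 1) h1
    rw [Sseq_top hn hpos hsum] at this
    omega

lemma pnat_eq_iff (hn : 1 ≤ n) (hpos : ∀ i, 1 ≤ d i) (hmono : ∀ i j : Fin n, i ≤ j → d j ≤ d i)
    (hsum : ∑ i, d i = 2 * (n - 1)) {k i : ℕ} (hk1 : 1 ≤ k) (hk2 : k < n) (hi : i < n) :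
    pnat n d k = i ↔ (Sseq n d i ≤ k ∧ k < Sseq n d (i + 1)) := by
  constructor
  · rintro rfl
    exact ⟨pnat_spec1 hn hk1, pnat_spec2 hn hpos hsum hk2⟩
  · rintro ⟨hle, hlt⟩
    have hub : i ≤ pnat n d k := Nat.le_findGreatest (by omega) hle
    have hub2 : pnat n d k ≤ i := by
      by_contra hcon
      push_neg at hcon
      have hs1 : Sseq n d (i+1) ≤ Sseq n d (pnat n d k) := Sseq_mono _ _ (by omega)
      have hs2 := pnat_spec1 (d := d) hn hk1
      omega
    omega
end facts


lemma deg_eq_card {n : ℕ} (G : SimpleGraph (Fin n)) (v : Fin n) :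
    deg G v = (univ.filter (fun u => G.Adj v u)).card := by
  classical
  rw [deg, Set.ncard_eq_toFinset_card']
  congr 1
  ext u
  simp [Set.mem_toFinset, SimpleGraph.mem_neighborSet]

def depthN (f : ℕ → ℕ) (hf : ∀ k, k ≠ 0 → f k < k) : ℕ → ℕ
  | k => if h : k = 0 then 0 else depthN f hf (f k) + 1
termination_by k => k
decreasing_by exact hf k h

lemma depthN_eq (f : ℕ → ℕ) (hf : ∀ k, k ≠ 0 → f k < k) (k : ℕ) :
    depthN f hf k = if k = 0 then 0 else depthN f hf (f k) + 1 := by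
  rw [depthN]
  split <;> simp [*]

noncomputable def canonP (n : ℕ) (d : Fin n → ℕ) (hn : 0 < n) : Fin n → Fin n :=
  fun k => ⟨pnat n d k, lt_of_le_of_lt (pnat_le hn _) (by omega)⟩

noncomputable def canonT (n : ℕ) (d : Fin n → ℕ) (hn : 0 < n) : SimpleGraph (Fin n) :=
  SimpleGraph.fromRel (fun a b => a ≠ ⟨0, hn⟩ ∧ canonP n d hn a = b)

theorem canon_spec (n : ℕ) (d : Fin n → ℕ) (hn : 0 < n)
    (hpos : ∀ i, 1 ≤ d i) (hmono : ∀ i j : Fin n, i ≤ j → d j ≤ d i)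
    (hsum : ∑ i, d i = 2 * (n - 1)) :
    (canonT n d hn).IsTree ∧ (∀ i, deg (canonT n d hn) i = d i) ∧
    ((∀ i j : Fin n, i ≤ j →
        (canonT n d hn).dist ⟨0, hn⟩ i ≤ (canonT n d hn).dist ⟨0, hn⟩ j) ∧
     (∀ i j a b : Fin n, (canonT n d hn).Adj i a → (canonT n d hn).Adj j b →
        ¬ (canonT n d hn).Adj i b → ¬ (canonT n d hn).Adj j a →
        (canonT n d hn).dist ⟨0, hn⟩ i = (canonT n d hn).dist ⟨0, hn⟩ j →
        (canonT n d hn).dist ⟨0, hn⟩ a = (canonT n d hn).dist ⟨0, hn⟩ i + 1 →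
        (canonT n d hn).dist ⟨0, hn⟩ b = (canonT n d hn).dist ⟨0, hn⟩ i + 1 →
        i < j → a < b)) := by
  classical
  have hn1 : 1 ≤ n := hn
  set z : Fin n := ⟨0, hn⟩ with hzdef
  set P : Fin n → Fin n := canonP n d hn with hPdef
  set G : SimpleGraph (Fin n) := canonT n d hn with hGdef
  have hPval : ∀ k : Fin n, (P k : ℕ) = pnat n d (k : ℕ) := fun k => rfl
  have hzval : (z : ℕ) = 0 := rfl
  have hp : ∀ k : ℕ, k ≠ 0 → pnat n d k < k := pnat_lt_self hn1 hpos hmono hsum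
  have hknez : ∀ k : Fin n, k ≠ z ↔ (k : ℕ) ≠ 0 := by
    intro k
    constructor
    · intro h hc; exact h (Fin.ext hc)
    · intro h hc; exact h (by rw [hc])
  have hPlt : ∀ k : Fin n, k ≠ z → P k < k := by
    intro k hk
    rw [Fin.lt_def, hPval]
    exact hp _ ((hknez k).1 hk)
  have adj_char : ∀ a b : Fin n, G.Adj a b ↔
      ((a ≠ z ∧ P a = b) ∨ (b ≠ z ∧ P b = a)) := by
    intro a b
    rw [hGdef]
    show (SimpleGraph.fromRel _).Adj a b ↔ _
    rw [SimpleGraph.fromRel_adj]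
    constructor
    · rintro ⟨hne, h | h⟩
      · exact Or.inl h
      · exact Or.inr h
    · intro h
      refine ⟨?_, h⟩
      rcases h with ⟨haz, hPa⟩ | ⟨hbz, hPb⟩
      · have hba : b < a := hPa ▸ hPlt a haz
        intro hc; rw [hc] at hba; exact lt_irrefl _ hba
      · have hab : a < b := hPb ▸ hPlt b hbz
        intro hc; rw [hc] at hab; exact lt_irrefl _ hab
  -- depth function
  set dep : ℕ → ℕ := depthN (pnat n d) hp with hdepdef
  have hdep0 : dep 0 = 0 := by rw [hdepdef, depthN_eq]; simp
  have hdepk : ∀ k : ℕ, k ≠ 0 → dep k = dep (pnat n d k) + 1 := by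
    intro k hk
    conv_lhs => rw [hdepdef, depthN_eq]
    rw [if_neg hk]
  have dep_mono : ∀ b a : ℕ, a ≤ b → dep a ≤ dep b := by
    intro b
    induction b using Nat.strong_induction_on with
    | _ b ih =>
      intro a hab
      rcases Nat.eq_zero_or_pos b with rfl | hb
      · have ha : a = 0 := by omega
        rw [ha]
      · by_cases ha : a = 0
        · rw [ha, hdep0]; exact Nat.zero_le _
        · rw [hdepk a ha, hdepk b (by omega)]
          have h1 : pnat n d a ≤ pnat n d b := pnat_mono a b hab
          have h2 : pnat n d b < b := hp b (by omega)
          have := ih (pnat n d b) h2 (pnat n d a) h1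
          omega
  have dep_adj : ∀ a b : Fin n, G.Adj a b →
      dep (b : ℕ) = dep (a : ℕ) + 1 ∨ dep (a : ℕ) = dep (b : ℕ) + 1 := by
    intro a b hadj
    rcases (adj_char a b).1 hadj with ⟨haz, hPa⟩ | ⟨hbz, hPb⟩
    · right
      rw [hdepk (a : ℕ) ((hknez a).1 haz), ← hPval, hPa]
    · left
      rw [hdepk (b : ℕ) ((hknez b).1 hbz), ← hPval, hPb]
  have hadjP : ∀ k : Fin n, k ≠ z → G.Adj k (P k) :=
    fun k hk => (adj_char k (P k)).2 (Or.inl ⟨hk, rfl⟩)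
  have reach0 : ∀ m : ℕ, ∀ k : Fin n, (k : ℕ) = m → G.Reachable k z := by
    intro m
    induction m using Nat.strong_induction_on with
    | _ m ih =>
      intro k hk
      by_cases hkz : k = z
      · rw [hkz]
      · have hk0 : (k : ℕ) ≠ 0 := (hknez k).1 hkz
        have hlt : (P k : ℕ) < m := by rw [hPval, ← hk]; exact hp _ hk0
        exact (hadjP k hkz).reachable.trans (ih _ hlt (P k) rfl)
  have hconn : G.Connected := by
    rw [SimpleGraph.connected_iff]
    refine ⟨fun u v => (reach0 _ u rfl).trans (reach0 _ v rfl).symm, ⟨z⟩⟩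
  have hdepz : dep (z : ℕ) = 0 := by rw [hzval, hdep0]
  have dist_le_dep : ∀ m : ℕ, ∀ k : Fin n, (k : ℕ) = m → G.dist z k ≤ dep (k : ℕ) := by
    intro m
    induction m using Nat.strong_induction_on with
    | _ m ih =>
      intro k hk
      by_cases hkz : k = z
      · rw [hkz, SimpleGraph.dist_self, hdepz]
      · have hk0 : (k : ℕ) ≠ 0 := (hknez k).1 hkz
        have hlt : (P k : ℕ) < m := by rw [hPval, ← hk]; exact hp _ hk0
        have h1 : G.dist z k ≤ G.dist z (P k) + G.dist (P k) k := hconn.dist_triangle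
        have h2 : G.dist (P k) k = 1 := SimpleGraph.dist_eq_one_iff_adj.2 (hadjP k hkz).symm
        have h3 := ih _ hlt (P k) rfl
        rw [hdepk (k : ℕ) hk0, ← hPval]
        omega
  have wlb : ∀ (a b : Fin n) (w : G.Walk a b), dep (b : ℕ) ≤ dep (a : ℕ) + w.length := by
    intro a b w
    induction w with
    | nil => simp
    | cons h q ih =>
      rcases dep_adj _ _ h with hc | hc <;>
        · rw [Walk.length_cons]; omega
  have dist_eq : ∀ k : Fin n, G.dist z k = dep (k : ℕ) := by
    intro k
    refine le_antisymm (dist_le_dep _ k rfl) ?_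
    obtain ⟨w, hw⟩ := hconn.exists_walk_length_eq_dist z k
    have := wlb z k w
    rw [hw, hdepz] at this
    omega
  -- acyclicity
  have hacyc : G.IsAcyclic := by
    intro v c hc
    have hsupne : c.support.toFinset.Nonempty := ⟨v, by simp [Walk.start_mem_support]⟩
    set M := c.support.toFinset.max' hsupne with hM
    have hMmem : M ∈ c.support := by
      have := c.support.toFinset.max'_mem hsupne
      simpa using this
    have hMmax : ∀ w, w ∈ c.support → w ≤ M := fun w hw =>
      Finset.le_max' _ w (by simpa using hw)
    set c' : G.Walk M M := c.rotate M hMmem with hc'def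
    have hc' : c'.IsCycle := hc.rotate hMmem
    have hsub : ∀ w, w ∈ c'.support → w ∈ c.support := by
      intro w hw
      rcases (Walk.mem_support_iff _).1 hw with rfl | hw'
      · exact hMmem
      · have hrot := Walk.support_rotate c M hMmem
        have := hrot.mem_iff.1 hw'
        exact (Walk.mem_support_iff _).2 (Or.inr this)
    obtain ⟨x, hax, q, hceq⟩ := Walk.not_nil_iff.1 hc'.not_nil
    have hcyc2 : (Walk.cons hax q).IsCycle := hceq ▸ hc'
    have hqpath := (Walk.cons_isCycle_iff q hax).1 hcyc2
    have hqlen : 1 ≤ q.length := by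
      have h3 := hc'.three_le_length
      rw [hceq, Walk.length_cons] at h3
      omega
    have hqrnil : ¬ q.reverse.Nil := by
      rw [Walk.not_nil_iff_lt_length, Walk.length_reverse]; omega
    obtain ⟨y, hay, q2, hqr⟩ := Walk.not_nil_iff.1 hqrnil
    have hyx : y ≠ x := by
      intro h
      have hemem : s(M, y) ∈ q.reverse.edges := by
        rw [hqr, Walk.edges_cons]; exact List.mem_cons_self
      rw [Walk.edges_reverse, List.mem_reverse] at hemem
      rw [h] at hemem
      exact hqpath.2 hemem
    have hxmem : x ∈ c'.support := by
      rw [hceq, Walk.support_cons]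
      exact List.mem_cons_of_mem _ q.start_mem_support
    have hymem : y ∈ c'.support := by
      have hy2 : y ∈ q.reverse.support := by
        rw [hqr, Walk.support_cons]
        exact List.mem_cons_of_mem _ q2.start_mem_support
      rw [Walk.support_reverse, List.mem_reverse] at hy2
      rw [hceq, Walk.support_cons]
      exact List.mem_cons_of_mem _ hy2
    have hxM : x < M := lt_of_le_of_ne (hMmax x (hsub x hxmem)) hax.ne'
    have hyM : y < M := lt_of_le_of_ne (hMmax y (hsub y hymem)) hay.ne'
    have hMz : M ≠ z := by
      intro h
      rw [h] at hxM
      rw [Fin.lt_def, hzval] at hxM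
      omega
    have hx' : x = P M := by
      rcases (adj_char M x).1 hax with ⟨_, hPx⟩ | ⟨hxz, hPx⟩
      · exact hPx.symm
      · exfalso
        have h1 := hPlt x hxz
        rw [hPx] at h1
        exact absurd (lt_trans h1 hxM) (lt_irrefl M)
    have hy' : y = P M := by
      rcases (adj_char M y).1 hay with ⟨_, hPy⟩ | ⟨hyz, hPy⟩
      · exact hPy.symm
      · exfalso
        have h1 := hPlt y hyz
        rw [hPy] at h1
        exact absurd (lt_trans h1 hyM) (lt_irrefl M)
    exact hyx (hy'.trans hx'.symm)
  have hTree : G.IsTree := ⟨hconn, hacyc⟩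
  -- degrees
  have fiber_card : ∀ i : Fin n,
      (univ.filter (fun k : Fin n => k ≠ z ∧ P k = i)).card = cseq n d (i : ℕ) := by
    intro i
    have hS1 : 1 ≤ Sseq n d (i : ℕ) := by unfold Sseq; omega
    have hSn : Sseq n d ((i : ℕ) + 1) ≤ n := by
      have := Sseq_mono (d := d) ((i : ℕ) + 1) n i.isLt
      rw [Sseq_top hn1 hpos hsum] at this
      exact this
    rw [show cseq n d (i:ℕ) = Sseq n d ((i:ℕ)+1) - Sseq n d (i:ℕ) by
      unfold Sseq; rw [Finset.sum_range_succ]; omega]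
    rw [← Nat.card_Ico]
    have hi' : ∀ (k : Fin n), k ∈ univ.filter (fun k : Fin n => k ≠ z ∧ P k = i) →
        (k : ℕ) ∈ Finset.Ico (Sseq n d (i:ℕ)) (Sseq n d ((i:ℕ)+1)) := by
      intro k hk
      simp only [mem_filter, mem_univ, true_and] at hk
      obtain ⟨hkz, hPk⟩ := hk
      have hk0 : (k:ℕ) ≠ 0 := (hknez k).1 hkz
      have hpk : pnat n d (k:ℕ) = (i:ℕ) := by rw [← hPval, hPk]
      exact Finset.mem_Ico.2
        ((pnat_eq_iff hn1 hpos hmono hsum (by omega) k.isLt i.isLt).1 hpk)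
    have hj' : ∀ (m : ℕ) (hm : m ∈ Finset.Ico (Sseq n d (i:ℕ)) (Sseq n d ((i:ℕ)+1))),
        (⟨m, lt_of_lt_of_le (Finset.mem_Ico.1 hm).2 hSn⟩ : Fin n)
          ∈ univ.filter (fun k : Fin n => k ≠ z ∧ P k = i) := by
      intro m hm
      have hm' := Finset.mem_Ico.1 hm
      simp only [mem_filter, mem_univ, true_and]
      have hm1 : 1 ≤ m := le_trans hS1 hm'.1
      have hmn : m < n := lt_of_lt_of_le hm'.2 hSn
      constructor
      · rw [hknez]
        simp only [Fin.val_mk]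
        omega
      · apply Fin.ext
        rw [hPval]
        exact (pnat_eq_iff hn1 hpos hmono hsum hm1 hmn i.isLt).2 hm'
    exact Finset.card_bij' (fun (k : Fin n) _ => (k : ℕ))
      (fun m hm => (⟨m, lt_of_lt_of_le (Finset.mem_Ico.1 hm).2 hSn⟩ : Fin n))
      hi' hj' (fun a ha => Fin.ext rfl) (fun m hm => rfl)
  have deg_eq : ∀ i : Fin n, deg G i = d i := by
    intro i
    rw [deg_eq_card]
    by_cases hiz : i = z
    · have hflt : univ.filter (fun u => G.Adj i u)
          = univ.filter (fun k : Fin n => k ≠ z ∧ P k = i) := by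
        ext b
        simp only [mem_filter, mem_univ, true_and]
        rw [adj_char]
        constructor
        · rintro (⟨hiz', _⟩ | h)
          · exact absurd hiz hiz'
          · exact h
        · exact Or.inr
      rw [hflt, fiber_card, hiz]
      show cseq n d 0 = d z
      unfold cseq
      rw [dif_pos hn, if_pos rfl]
    · have hsplit : univ.filter (fun u => G.Adj i u)
          = insert (P i) (univ.filter (fun k : Fin n => k ≠ z ∧ P k = i)) := by
        ext b
        simp only [mem_filter, mem_univ, true_and, mem_insert]
        rw [adj_char]
        constructor
        · rintro (⟨_, hPi⟩ | h)
          · exact Or.inl hPi.symm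
          · exact Or.inr h
        · rintro (rfl | h)
          · exact Or.inl ⟨hiz, rfl⟩
          · exact Or.inr h
      have hnm : P i ∉ univ.filter (fun k : Fin n => k ≠ z ∧ P k = i) := by
        simp only [mem_filter, mem_univ, true_and, not_and]
        intro hPiz hPPi
        have h1 := hPlt (P i) hPiz
        have h2 := hPlt i hiz
        rw [hPPi] at h1
        exact absurd (lt_trans h1 h2) (lt_irrefl i)
      rw [hsplit, Finset.card_insert_of_notMem hnm, fiber_card]
      have hi0 : (i:ℕ) ≠ 0 := (hknez i).1 hiz
      unfold cseq
      rw [dif_pos i.isLt, if_neg hi0]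
      have := hpos i
      simp only [Fin.eta]
      omega
  refine ⟨hTree, deg_eq, ?_, ?_⟩
  · intro i j hij
    rw [dist_eq, dist_eq]
    exact dep_mono _ _ hij
  · intro i j a b h1a h2b _ _ hij hda hdb hlt
    simp only [dist_eq] at hij hda hdb
    have hPa : a ≠ z ∧ P a = i := by
      rcases (adj_char i a).1 h1a with ⟨hiz, hPi⟩ | h
      · exfalso
        have := hdepk (i:ℕ) ((hknez i).1 hiz)
        rw [← hPval, hPi] at this
        omega
      · exact h
    have hPb : b ≠ z ∧ P b = j := by
      rcases (adj_char j b).1 h2b with ⟨hjz, hPj⟩ | h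
      · exfalso
        have := hdepk (j:ℕ) ((hknez j).1 hjz)
        rw [← hPval, hPj] at this
        omega
      · exact h
    by_contra hcon
    push_neg at hcon
    have hba : (b:ℕ) ≤ (a:ℕ) := by rw [← Fin.le_def]; exact hcon
    have := pnat_mono (n := n) (d := d) (b:ℕ) (a:ℕ) hba
    rw [← hPval, ← hPval, hPa.2, hPb.2] at this
    rw [Fin.lt_def] at hlt
    omega
theorem keyU {n : ℕ} (T : SimpleGraph (Fin n)) (hT : T.IsTree) (hn0 : 0 < n)
    (σ : Fin n ≃ Fin n) (hb : BFSord T hn0 σ)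
    (d : Fin n → ℕ) (hmono : ∀ i j : Fin n, i ≤ j → d j ≤ d i)
    (hdeg : ∃ e : Fin n ≃ Fin n, ∀ i, deg T (e i) = d i) :
    ∃ P : Fin n → Fin n,
      (∀ a b : Fin n, a ≤ b → P a ≤ P b) ∧
      (∀ x : Fin n, (univ.filter (fun k => P k = x)).card
          = if x = ⟨0, hn0⟩ then d x + 1 else d x - 1) ∧
      (∀ a b : Fin n, T.Adj (σ a) (σ b) ↔
        ((a ≠ ⟨0, hn0⟩ ∧ P a = b) ∨ (b ≠ ⟨0, hn0⟩ ∧ P b = a))) := by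
  classical
  obtain ⟨h1, h2, h3⟩ := hb
  set z : Fin n := ⟨0, hn0⟩ with hzdef
  set r : Fin n := σ z with hrdef
  -- degrees along σ are exactly d
  have hdegσ : ∀ k, deg T (σ k) = d k := by
    obtain ⟨e, he⟩ := hdeg
    have hf : ∀ k, deg T (σ k) = d ((σ.trans e.symm) k) := by
      intro k
      have := he (e.symm (σ k))
      simpa using this
    have := sorted_tuple_unique (fun k => deg T (σ k)) d h2 hmono
      (perm_map_of_comp _ _ (σ.trans e.symm) hf)
    exact fun k => congrFun this k
  have hzle : ∀ k : Fin n, z ≤ k := fun k => by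
    simp [Fin.le_def, hzdef]
  have hzeq : ∀ k : Fin n, k ≤ z → k = z := fun k hk => le_antisymm hk (hzle k)
  have hconn := hT.isConnected
  have hne_z : ∀ k, k ≠ z → σ k ≠ r := fun k hk he => hk (σ.injective he)
  have heq0 : ∀ k, T.dist r (σ k) = 0 → k = z := by
    intro k hk
    have : r = σ k := (hconn.dist_eq_zero_iff).1 hk
    exact (σ.injective this.symm).symm ▸ rfl
  have hzdist : T.dist r (σ z) = 0 := by rw [← hrdef]; exact SimpleGraph.dist_self
  have hpar : ∀ k, k ≠ z → ∃! u, T.Adj (σ k) u ∧ T.dist r u + 1 = T.dist r (σ k) :=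
    fun k hk => tree_unique_parent hT r (hne_z k hk)
  set P : Fin n → Fin n := fun k =>
    if hk : k = z then z else σ.symm (hpar k hk).choose with hPdef
  have hPz : P z = z := by simp [hPdef]
  have hPspec : ∀ k (hk : k ≠ z),
      T.Adj (σ k) (σ (P k)) ∧ T.dist r (σ (P k)) + 1 = T.dist r (σ k) := by
    intro k hk
    have : P k = σ.symm (hpar k hk).choose := by simp [hPdef, hk]
    rw [this, Equiv.apply_symm_apply]
    exact (hpar k hk).choose_spec.1
  have hPuniq : ∀ k (hk : k ≠ z) (u : Fin n),
      T.Adj (σ k) (σ u) → T.dist r (σ u) + 1 = T.dist r (σ k) → P k = u := by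
    intro k hk u hadj hd
    have h1' := (hpar k hk).choose_spec.2 (σ u) ⟨hadj, hd⟩
    have : P k = σ.symm (hpar k hk).choose := by simp [hPdef, hk]
    rw [this, ← h1', Equiv.symm_apply_apply]
  -- adjacency characterization
  have hadjchar : ∀ a b : Fin n, T.Adj (σ a) (σ b) ↔
      ((a ≠ z ∧ P a = b) ∨ (b ≠ z ∧ P b = a)) := by
    intro a b
    constructor
    · intro hadj
      rcases tree_adj_dist hT r hadj with hc | hc
      · -- dist r (σ b) = dist r (σ a) + 1
        have hbz : b ≠ z := by
          intro hbz; rw [hbz, hzdist] at hc; omega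
        exact Or.inr ⟨hbz, hPuniq b hbz a hadj.symm (by omega)⟩
      · have haz : a ≠ z := by
          intro haz; rw [haz, hzdist] at hc; omega
        exact Or.inl ⟨haz, hPuniq a haz b hadj (by omega)⟩
    · rintro (⟨haz, rfl⟩ | ⟨hbz, rfl⟩)
      · exact (hPspec a haz).1
      · exact (hPspec b hbz).1.symm
  refine ⟨P, ?_, ?_, fun a b => hadjchar a b⟩
  · -- monotonicity of P
    intro a b hab
    by_cases haz : a = z
    · rw [haz, hPz]; exact hzle _
    by_cases hbz : b = z
    · exact absurd (hzeq a (hbz ▸ hab)) haz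
    by_contra hcon
    push_neg at hcon
    have hij : P b < P a := hcon
    have haneb : a ≠ b := by rintro rfl; exact absurd rfl (ne_of_gt hij)
    have halb : a < b := lt_of_le_of_ne hab haneb
    have hda := (hPspec a haz).2
    have hdb := (hPspec b hbz).2
    -- heights
    have hhab : T.dist r (σ a) ≤ T.dist r (σ b) := h1 a b hab
    have hhP : T.dist r (σ (P b)) ≤ T.dist r (σ (P a)) := h1 _ _ (le_of_lt hij)
    have hheq : T.dist r (σ a) = T.dist r (σ b) := by omega
    have hhPeq : T.dist r (σ (P b)) = T.dist r (σ (P a)) := by omega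
    -- nonadjacency
    have hn1 : ¬ T.Adj (σ (P b)) (σ a) := by
      intro hadj
      rcases (hadjchar (P b) a).1 hadj with ⟨hPbz, hPa⟩ | ⟨haz', hPa⟩
      · -- P (P b) = a : heights contradiction
        have := (hPspec (P b) hPbz).2
        rw [hPa] at this
        omega
      · rw [hPa] at hij; exact lt_irrefl _ hij
    have hn2 : ¬ T.Adj (σ (P a)) (σ b) := by
      intro hadj
      rcases (hadjchar (P a) b).1 hadj with ⟨hPaz, hPb⟩ | ⟨hbz', hPb⟩
      · have := (hPspec (P a) hPaz).2
        rw [hPb] at this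
        omega
      · rw [hPb] at hij; exact lt_irrefl _ hij
    have := h3 (P b) (P a) b a (hPspec b hbz).1.symm (hPspec a haz).1.symm hn1 hn2
      hhPeq (by omega) (by omega) hij
    exact absurd this (not_lt_of_ge (le_of_lt halb))
  · -- fiber cardinalities
    intro x
    have hcardAB : (univ.filter (fun k => k ≠ z ∧ P k = x)).card
        = (univ.filter (fun u => T.Adj (σ x) u ∧ T.dist r u = T.dist r (σ x) + 1)).card := by
      apply Finset.card_bij (fun k _ => σ k)
      · intro k hk
        simp only [mem_filter, mem_univ, true_and] at hk ⊢
        obtain ⟨hkz, hPk⟩ := hk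
        have h1' := (hPspec k hkz).1
        have h2' := (hPspec k hkz).2
        rw [hPk] at h1' h2'
        exact ⟨h1'.symm, by omega⟩
      · intro k1 hk1 k2 hk2 he
        exact σ.injective he
      · intro u hu
        simp only [mem_filter, mem_univ, true_and] at hu
        obtain ⟨hadj, hdist⟩ := hu
        refine ⟨σ.symm u, ?_, by simp⟩
        simp only [mem_filter, mem_univ, true_and]
        have hne : σ.symm u ≠ z := by
          intro hcon
          have : u = σ z := by rw [← hcon, Equiv.apply_symm_apply]
          rw [this, hzdist] at hdist
          omega
        refine ⟨hne, ?_⟩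
        apply hPuniq (σ.symm u) hne x
        · rw [Equiv.apply_symm_apply]; exact hadj.symm
        · rw [Equiv.apply_symm_apply]; omega
    -- neighbors of σ x and degree
    have hdegx := hdegσ x
    rw [deg_eq_card] at hdegx
    by_cases hxz : x = z
    · -- all neighbors are children
      have hBall : (univ.filter (fun u => T.Adj (σ x) u)) =
          (univ.filter (fun u => T.Adj (σ x) u ∧ T.dist r u = T.dist r (σ x) + 1)) := by
        ext u
        simp only [mem_filter, mem_univ, true_and]
        constructor
        · intro hadj
          refine ⟨hadj, ?_⟩
          rcases tree_adj_dist hT r hadj with hc | hc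
          · exact hc
          · rw [hxz, hzdist] at hc; omega
        · exact fun h => h.1
      have hAx : (univ.filter (fun k => P k = x)) =
          insert z (univ.filter (fun k => k ≠ z ∧ P k = x)) := by
        ext k
        simp only [mem_filter, mem_univ, true_and, mem_insert]
        constructor
        · intro hPk
          by_cases hkz : k = z
          · exact Or.inl hkz
          · exact Or.inr ⟨hkz, hPk⟩
        · rintro (rfl | ⟨_, hPk⟩)
          · rw [hPz, hxz]
          · exact hPk
      rw [hAx, Finset.card_insert_of_notMem (by simp), hcardAB, ← hBall, hdegx]
      simp [hxz]
    · -- x ≠ z : neighbors are children plus parent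
      have hBx : (univ.filter (fun u => T.Adj (σ x) u)) =
          insert (σ (P x)) (univ.filter (fun u => T.Adj (σ x) u ∧ T.dist r u = T.dist r (σ x) + 1)) := by
        ext u
        simp only [mem_filter, mem_univ, true_and, mem_insert]
        constructor
        · intro hadj
          rcases tree_adj_dist hT r hadj with hc | hc
          · exact Or.inr ⟨hadj, hc⟩
          · left
            have := hPuniq x hxz (σ.symm u) (by rw [Equiv.apply_symm_apply]; exact hadj)
              (by rw [Equiv.apply_symm_apply]; omega)
            rw [this, Equiv.apply_symm_apply]
        · rintro (rfl | ⟨hadj, _⟩)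
          · exact (hPspec x hxz).1
          · exact hadj
      have hnotmem : σ (P x) ∉ (univ.filter (fun u => T.Adj (σ x) u ∧ T.dist r u = T.dist r (σ x) + 1)) := by
        simp only [mem_filter, mem_univ, true_and, not_and]
        intro _
        have := (hPspec x hxz).2
        omega
      have hAx : (univ.filter (fun k => P k = x)) = (univ.filter (fun k => k ≠ z ∧ P k = x)) := by
        ext k
        simp only [mem_filter, mem_univ, true_and]
        constructor
        · intro hPk
          refine ⟨?_, hPk⟩
          rintro rfl
          rw [hPz] at hPk
          exact hxz hPk.symm
        · exact fun h => h.2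
      rw [hAx, hcardAB, if_neg hxz]
      rw [hBx, Finset.card_insert_of_notMem hnotmem] at hdegx
      omega

theorem stmt_12 {n : ℕ} (hn : 1 ≤ n) (d : Fin n → ℕ)
    (hpos : ∀ i, 1 ≤ d i) (hmono : ∀ i j : Fin n, i ≤ j → d j ≤ d i)
    (hsum : ∑ i, d i = 2 * (n - 1)) :
    (∃ T : SimpleGraph (Fin n), T.IsTree ∧
      (∃ e : Fin n ≃ Fin n, ∀ i, deg T (e i) = d i) ∧ hasBFSOrdering T) ∧
    (∀ T₁ T₂ : SimpleGraph (Fin n), T₁.IsTree → T₂.IsTree →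
      (∃ e : Fin n ≃ Fin n, ∀ i, deg T₁ (e i) = d i) →
      (∃ e : Fin n ≃ Fin n, ∀ i, deg T₂ (e i) = d i) →
      hasBFSOrdering T₁ → hasBFSOrdering T₂ →
      Nonempty (T₁ ≃g T₂)) := by
  classical
  constructor
  · -- existence
    obtain ⟨hTree, hdeg, hd1, hd3⟩ := canon_spec n d hn hpos hmono hsum
    refine ⟨canonT n d hn, hTree, ⟨Equiv.refl _, fun i => by simpa using hdeg i⟩,
      hn, Equiv.refl _, ?_, ?_, ?_⟩
    · intro i j hij
      simpa using hd1 i j hij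
    · intro i j hij
      simp only [Equiv.refl_apply]
      rw [hdeg i, hdeg j]
      exact hmono i j hij
    · intro i j a b h1 h2 h3 h4 h5 h6 h7 h8
      simp only [Equiv.refl_apply] at *
      exact hd3 i j a b h1 h2 h3 h4 h5 h6 h7 h8
  · -- uniqueness
    intro T₁ T₂ hT₁ hT₂ hdeg₁ hdeg₂ hb₁ hb₂
    obtain ⟨hn₁, σ₁, hbfs₁⟩ := hb₁
    obtain ⟨hn₂, σ₂, hbfs₂⟩ := hb₂
    obtain ⟨P₁, hm₁, hf₁, hc₁⟩ := keyU T₁ hT₁ hn₁ σ₁ hbfs₁ d hmono hdeg₁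
    obtain ⟨P₂, hm₂, hf₂, hc₂⟩ := keyU T₂ hT₂ hn₂ σ₂ hbfs₂ d hmono hdeg₂
    have hz12 : (⟨0, hn₁⟩ : Fin n) = ⟨0, hn₂⟩ := rfl
    have hPP : P₁ = P₂ := by
      have hfib : ∀ x : Fin n, (univ.filter (fun k => P₁ k = x)).card
          = (univ.filter (fun k => P₂ k = x)).card := by
        intro x
        rw [hf₁ x, hf₂ x]
      have hperm := perm_map_of_fibers P₁ P₂ hfib
      have hdual := sorted_tuple_unique (X := (Fin n)ᵒᵈ)
        (fun k => OrderDual.toDual (P₁ k)) (fun k => OrderDual.toDual (P₂ k))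
        (fun i j hij => hm₁ i j hij) (fun i j hij => hm₂ i j hij) ?_
      · funext k
        have := congrFun hdual k
        exact OrderDual.toDual.injective this
      · have h1 : (List.finRange n).map (fun k => OrderDual.toDual (P₁ k))
            = ((List.finRange n).map P₁).map OrderDual.toDual := by
          rw [List.map_map]; rfl
        have h2 : (List.finRange n).map (fun k => OrderDual.toDual (P₂ k))
            = ((List.finRange n).map P₂).map OrderDual.toDual := by
          rw [List.map_map]; rfl
        rw [h1, h2]
        exact hperm.map _
    refine ⟨⟨σ₁.symm.trans σ₂, ?_⟩⟩
    intro a b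
    simp only [Equiv.trans_apply]
    rw [hc₂ (σ₁.symm a) (σ₁.symm b)]
    have := hc₁ (σ₁.symm a) (σ₁.symm b)
    rw [Equiv.apply_symm_apply, Equiv.apply_symm_apply] at this
    rw [this, hPP]
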